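/- Nonzero loss for conflicting equivalent points: let u = {(c₁=1, y₁), (c₂, y₂)} consist of two samples with identical features where the first is uncensored with event time y₁ and the second has observation time y₂ > y₁. Then for every survival function S : ℝ → [0,1], the summed per-sample loss ℓ(S, 1, y₁) + ℓ(S, c₂, y₂) is strictly positive; hence the equivalent loss E_u > 0. -/

import Mathlib

open MeasureTheory intervalIntegral

/-- Nonzero loss for conflicting equivalent points: for two samples with identical
features, the first uncensored (`c₁ = 1`) with event time `y₁` and the second with
observation time `y₂ > y₁`, every survival function `S : ℝ → [0,1]` has strictly
positive summed per-sample IBS loss; hence the equivalent loss `E_u > 0`. -/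
theorem conflicting_equivalent_points_positive_loss
    (N : ℕ) (hN : 1 ≤ N)
    (ymax y1 y2 : ℝ) (hy1 : 0 < y1) (hy12 : y1 < y2) (hy2 : y2 ≤ ymax)
    (G : ℝ → ℝ) (hGmeas : Measurable G) (hG : ∀ y, G y ∈ Set.Ioc (0:ℝ) 1)
    (c2 : ℝ) (hc2 : c2 = 0 ∨ c2 = 1)
    (S : ℝ → ℝ) (hSmeas : Measurable S) (hS : ∀ y, S y ∈ Set.Icc (0:ℝ) 1)
    (hint1 : IntervalIntegrable (fun r => (S r - 1)^2 / G r) volume 0 y1)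
    (hint2 : IntervalIntegrable (fun r => (S r)^2 / G y1) volume y1 ymax)
    (hint3 : IntervalIntegrable (fun r => (S r - 1)^2 / G r) volume 0 y2)
    (hint4 : IntervalIntegrable (fun r => (S r)^2 / G y2) volume y2 ymax) :
    0 < (1 / (ymax * (N:ℝ))) *
          ((∫ r in (0:ℝ)..y1, (S r - 1)^2 / G r)
            + 1 * ∫ r in y1..ymax, (S r)^2 / G y1)
        + (1 / (ymax * (N:ℝ))) *
          ((∫ r in (0:ℝ)..y2, (S r - 1)^2 / G r)
            + c2 * ∫ r in y2..ymax, (S r)^2 / G y2) := by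
  have hGpos : ∀ y, 0 < G y := fun y => (hG y).1
  have hGle : ∀ y, G y ≤ 1 := fun y => (hG y).2
  have h1max : y1 ≤ ymax := (hy12.le.trans hy2)
  have h0y2 : (0:ℝ) ≤ y2 := (hy1.trans hy12).le
  -- nonnegativity of integrands
  have hnn1 : ∀ r, 0 ≤ (S r - 1)^2 / G r := fun r => div_nonneg (sq_nonneg _) (hGpos r).le
  have hnn2 : ∀ r, 0 ≤ (S r)^2 / G y1 := fun r => div_nonneg (sq_nonneg _) (hGpos y1).le
  have hnn4 : ∀ r, 0 ≤ (S r)^2 / G y2 := fun r => div_nonneg (sq_nonneg _) (hGpos y2).le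
  -- integrability on subintervals
  have i2' : IntervalIntegrable (fun r => (S r)^2 / G y1) volume y1 y2 := by
    apply hint2.mono_set
    rw [Set.uIcc_of_le hy12.le, Set.uIcc_of_le h1max]
    exact Set.Icc_subset_Icc le_rfl hy2
  have i2'' : IntervalIntegrable (fun r => (S r)^2 / G y1) volume y2 ymax := by
    apply hint2.mono_set
    rw [Set.uIcc_of_le hy2, Set.uIcc_of_le h1max]
    exact Set.Icc_subset_Icc hy12.le le_rfl
  have i3' : IntervalIntegrable (fun r => (S r - 1)^2 / G r) volume y1 y2 := by
    apply hint3.mono_set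
    rw [Set.uIcc_of_le hy12.le, Set.uIcc_of_le h0y2]
    exact Set.Icc_subset_Icc hy1.le le_rfl
  have i3'' : IntervalIntegrable (fun r => (S r - 1)^2 / G r) volume 0 y1 := hint1
  -- pointwise bounds : f ≤ f / G
  have hb2 : ∀ r, (S r)^2 ≤ (S r)^2 / G y1 := fun r =>
    (le_div_iff₀ (hGpos y1)).2 (mul_le_of_le_one_right (sq_nonneg _) (hGle y1))
  have hb3 : ∀ r, (S r - 1)^2 ≤ (S r - 1)^2 / G r := fun r =>
    (le_div_iff₀ (hGpos r)).2 (mul_le_of_le_one_right (sq_nonneg _) (hGle r))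
  -- integrability of the plain squares
  have iS2 : IntervalIntegrable (fun r => (S r)^2) volume y1 y2 := by
    apply i2'.mono_fun ((hSmeas.pow_const 2).aestronglyMeasurable)
    filter_upwards with x
    rw [Real.norm_of_nonneg (sq_nonneg _), Real.norm_of_nonneg (hnn2 x)]
    exact hb2 x
  have iSm1 : IntervalIntegrable (fun r => (S r - 1)^2) volume y1 y2 := by
    apply i3'.mono_fun (((hSmeas.sub measurable_const).pow_const 2).aestronglyMeasurable)
    filter_upwards with x
    rw [Real.norm_of_nonneg (sq_nonneg _), Real.norm_of_nonneg (hnn1 x)]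
    exact hb3 x
  -- key lower bound on middle interval
  have key : (y2 - y1) / 2 ≤ (∫ r in y1..y2, (S r)^2) + ∫ r in y1..y2, (S r - 1)^2 := by
    rw [← intervalIntegral.integral_add iS2 iSm1]
    have hconst : (∫ _ in y1..y2, (1/2 : ℝ)) = (y2 - y1) / 2 := by
      rw [intervalIntegral.integral_const]; ring_nf
    calc (y2 - y1) / 2 = ∫ _ in y1..y2, (1/2 : ℝ) := hconst.symm
      _ ≤ _ := by
        apply intervalIntegral.integral_mono_on hy12.le (intervalIntegrable_const) (iS2.add iSm1)
        intro x _
        nlinarith [sq_nonneg (2 * S x - 1)]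
  have mono2 : (∫ r in y1..y2, (S r)^2) ≤ ∫ r in y1..y2, (S r)^2 / G y1 :=
    intervalIntegral.integral_mono_on hy12.le iS2 i2' (fun x _ => hb2 x)
  have mono3 : (∫ r in y1..y2, (S r - 1)^2) ≤ ∫ r in y1..y2, (S r - 1)^2 / G r :=
    intervalIntegral.integral_mono_on hy12.le iSm1 i3' (fun x _ => hb3 x)
  -- splitting
  have split2 : (∫ r in y1..ymax, (S r)^2 / G y1)
      = (∫ r in y1..y2, (S r)^2 / G y1) + ∫ r in y2..ymax, (S r)^2 / G y1 :=
    (intervalIntegral.integral_add_adjacent_intervals i2' i2'').symm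
  have split3 : (∫ r in (0:ℝ)..y2, (S r - 1)^2 / G r)
      = (∫ r in (0:ℝ)..y1, (S r - 1)^2 / G r) + ∫ r in y1..y2, (S r - 1)^2 / G r :=
    (intervalIntegral.integral_add_adjacent_intervals i3'' i3').symm
  -- nonnegativity of the side pieces
  have nn1 : 0 ≤ ∫ r in (0:ℝ)..y1, (S r - 1)^2 / G r :=
    intervalIntegral.integral_nonneg hy1.le (fun x _ => hnn1 x)
  have nn2 : 0 ≤ ∫ r in y2..ymax, (S r)^2 / G y1 :=
    intervalIntegral.integral_nonneg hy2 (fun x _ => hnn2 x)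
  have nn4 : 0 ≤ ∫ r in y2..ymax, (S r)^2 / G y2 :=
    intervalIntegral.integral_nonneg hy2 (fun x _ => hnn4 x)
  have hc2nn : 0 ≤ c2 := by rcases hc2 with h | h <;> simp [h]
  have hk : 0 < 1 / (ymax * (N:ℝ)) := by
    apply div_pos one_pos
    apply mul_pos (lt_of_lt_of_le (hy1.trans hy12) hy2)
    exact_mod_cast hN
  have hmid : 0 < (∫ r in y1..ymax, (S r)^2 / G y1)
      + ∫ r in (0:ℝ)..y2, (S r - 1)^2 / G r := by
    rw [split2, split3]
    have : 0 < (y2 - y1) / 2 := by linarith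
    linarith
  nlinarith [mul_nonneg hc2nn nn4, mul_pos hk hmid, mul_nonneg hk.le nn1,
    mul_nonneg hk.le (mul_nonneg hc2nn nn4)]
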